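/- There is a constant C depending only on the dimension d such that for every s ∈ R^d and every cube Q = Q(c,ℓ) in R^d, the average log_{s,-s,Q} of log_{s,-s}(x) = log|x−s| − log|x+s| over Q satisfies | log_{s,-s,Q} − ( log max(|c−s|, ℓ) − log max(|c+s|, ℓ) ) | ≤ C. -/

import Mathlib

open MeasureTheory Filter Set

noncomputable section

namespace TL

/-- Euclidean space `ℝ^d`. -/
abbrev Rd (d : ℕ) := EuclideanSpace ℝ (Fin d)

variable {d : ℕ}

/-- An axis-parallel cube in `ℝ^d` with center `c` and side length `len > 0`. -/
structure Cube (d : ℕ) where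
  c : Rd d
  len : ℝ
  len_pos : 0 < len

namespace Cube

/-- The set of points of the cube. -/
def set (Q : Cube d) : Set (Rd d) := {x | ∀ i, |x i - Q.c i| < Q.len / 2}

/-- The volume `ℓ^d` of a cube. -/
def vol (Q : Cube d) : ℝ := Q.len ^ d

/-- The cube dilated `α` times with respect to its center. -/
def dilate (Q : Cube d) (α : ℝ) (hα : 0 < α) : Cube d :=
  ⟨Q.c, α * Q.len, mul_pos hα Q.len_pos⟩

/-- The cube `2Q`. -/
def double (Q : Cube d) : Cube d := Q.dilate 2 two_pos

end Cube

/-- The average `f_Q` of `f` over the cube `Q`. -/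
def avg (Q : Cube d) (f : Rd d → ℝ) : ℝ := (Q.vol)⁻¹ * ∫ x in Q.set, f x

/-- The mean oscillation `‖f‖_Q = inf_b |Q|⁻¹ ∫_Q |f-b|`. -/
def osc (Q : Cube d) (f : Rd d → ℝ) : ℝ :=
  ⨅ b : ℝ, (Q.vol)⁻¹ * ∫ x in Q.set, |f x - b|

/-- The fixed unit cube `Q₀` centered at the origin. -/
def Q0 (d : ℕ) : Cube d := ⟨0, 1, one_pos⟩

/-- The `BMO` seminorm `sup_Q ‖f‖_Q`. -/
def bmoSeminorm (f : Rd d → ℝ) : ℝ := ⨆ Q : Cube d, osc Q f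

/-- Membership in `BMO(ℝ^d)`: local integrability together with finiteness of the seminorm. -/
def MemBMO (f : Rd d → ℝ) : Prop :=
  LocallyIntegrable f volume ∧ BddAbove (Set.range fun Q : Cube d => osc Q f)

/-- The `BMO` norm `‖f‖*_BMO = ‖f‖_BMO + |f_{Q₀}|`. -/
def bmoNorm (f : Rd d → ℝ) : ℝ := bmoSeminorm f + |avg (Q0 d) f|

/-- The side length `ℓ̃` of the smallest axis-parallel cube `Q̃` containing `Q` and `Q₀`. -/
def tildeLen (Q : Cube d) : ℝ :=
  ⨆ i : Fin d, (max (Q.c i + Q.len / 2) (1 / 2) - min (Q.c i - Q.len / 2) (-(1 / 2)))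

/-- The log-distance function `L(Q) = log max(ℓ̃/ℓ, ℓ̃) + 1`. -/
def Lfun (Q : Cube d) : ℝ := Real.log (max (tildeLen Q / Q.len) (tildeLen Q)) + 1

/-- The `LMO` seminorm `sup_Q L(Q)·‖f‖_Q`. -/
def lmoSeminorm (f : Rd d → ℝ) : ℝ := ⨆ Q : Cube d, Lfun Q * osc Q f

/-- Membership in `LMO(ℝ^d)`. -/
def MemLMO (f : Rd d → ℝ) : Prop :=
  LocallyIntegrable f volume ∧ BddAbove (Set.range fun Q : Cube d => Lfun Q * osc Q f)

/-- A Calderón–Zygmund kernel on `ℝ^d` with regularity exponent `δ ∈ (0,1]`. -/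
structure CZKernel (d : ℕ) where
  K : Rd d → Rd d → ℝ
  C : ℝ
  δ : ℝ
  δ_pos : 0 < δ
  δ_le_one : δ ≤ 1
  meas : Measurable (Function.uncurry K)
  size : ∀ x y : Rd d, x ≠ y → |K x y| ≤ C * ‖x - y‖ ^ (-(d : ℝ))
  regularity : ∀ x₁ x₂ y : Rd d, x₁ ≠ y → 2 * ‖x₁ - x₂‖ ≤ ‖x₁ - y‖ →
    |K x₁ y - K x₂ y| ≤ C * ‖x₁ - x₂‖ ^ δ / ‖x₁ - y‖ ^ ((d : ℝ) + δ)

/-- A Calderón–Zygmund operator: a bounded linear operator on `L²(ℝ^d)` associated to a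
Calderón–Zygmund kernel, i.e. represented by integration against the kernel a.e. outside
the support of compactly supported `L²` functions. -/
structure CZOperator (d : ℕ) extends CZKernel d where
  T : Lp ℝ 2 (volume : Measure (Rd d)) →L[ℝ] Lp ℝ 2 (volume : Measure (Rd d))
  repr : ∀ f : Lp ℝ 2 (volume : Measure (Rd d)),
    HasCompactSupport (f : Rd d → ℝ) →
    ∀ᵐ x : Rd d, x ∉ tsupport (f : Rd d → ℝ) → (T f : Rd d → ℝ) x = ∫ y, K x y * f y

open Classical in
/-- The local part `∫_{2Q} K(x,y) g(y) dy` of `T_Q g`, interpreted in the `L²` sense: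
`T` applied to `g·χ_{2Q}` (and junk value `0` if `g·χ_{2Q} ∉ L²`). -/
def TQloc (S : CZOperator d) (Q : Cube d) (g : Rd d → ℝ) : Rd d → ℝ :=
  fun x =>
    if h : MemLp (Q.double.set.indicator g) 2 (volume : Measure (Rd d)) then
      (S.T (MemLp.toLp _ h) : Rd d → ℝ) x
    else 0

/-- The tail part `∫_{ℝ^d∖2Q} (K(x,y)-K(c,y)) g(y) dy` of `T_Q g`. -/
def TQtail (S : CZOperator d) (Q : Cube d) (g : Rd d → ℝ) : Rd d → ℝ :=
  fun x => ∫ y in (Q.double.set)ᶜ, (S.K x y - S.K Q.c y) * g y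

/-- `T_Q g (x) = ∫_{2Q} K(x,y)g(y)dy + ∫_{ℝ^d∖2Q}(K(x,y)-K(c,y))g(y)dy` for `x ∈ Q`. -/
def TQ (S : CZOperator d) (Q : Cube d) (g : Rd d → ℝ) : Rd d → ℝ :=
  fun x => TQloc S Q g x + TQtail S Q g x

/-- `T_Q 1`, where `1` is the constant function `χ_{ℝ^d}`. -/
def Tone (S : CZOperator d) (Q : Cube d) : Rd d → ℝ := TQ S Q (fun _ => 1)

/-- For `f ∈ BMO`, `T_Q f = f_{2Q}·T_Q1 + T_Q(f - f_{2Q})`. -/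
def TQbmo (S : CZOperator d) (Q : Cube d) (f : Rd d → ℝ) : Rd d → ℝ :=
  fun x => avg Q.double f * Tone S Q x + TQ S Q (fun y => f y - avg Q.double f) x

/-- The seminorm `‖Tf‖_BMO = sup_Q ‖T_Q f‖_Q` for `f ∈ BMO`. -/
def TbmoSeminorm (S : CZOperator d) (f : Rd d → ℝ) : ℝ :=
  ⨆ Q : Cube d, osc Q (TQbmo S Q f)

/-- The function `log|x|`. -/
def logAbs : Rd d → ℝ := fun x => Real.log ‖x‖

/-- The function `log_{s,-s}(x) = log|x-s| - log|x+s|`. -/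
def logss (s : Rd d) : Rd d → ℝ := fun x => Real.log ‖x - s‖ - Real.log ‖x + s‖

section Aux

open Metric

lemma cube_set_preimage (Q : Cube d) :
    Q.set = ((MeasurableEquiv.toLp 2 (Fin d → ℝ)).symm) ⁻¹'
      (Set.univ.pi fun i => Ioo (Q.c i - Q.len / 2) (Q.c i + Q.len / 2)) := by
  ext x
  simp only [Cube.set, Set.mem_setOf_eq, Set.mem_preimage, Set.mem_univ_pi,
    Set.mem_Ioo, MeasurableEquiv.coe_toLp_symm]
  refine forall_congr' fun i => ?_
  rw [abs_sub_lt_iff]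
  constructor
  · rintro ⟨h1, h2⟩; constructor <;> linarith
  · rintro ⟨h1, h2⟩; constructor <;> linarith

lemma cube_measurableSet (Q : Cube d) : MeasurableSet Q.set := by
  rw [cube_set_preimage]
  exact (MeasurableEquiv.measurable _) (MeasurableSet.univ_pi fun i => measurableSet_Ioo)

lemma cube_volume (Q : Cube d) : volume Q.set = ENNReal.ofReal (Q.len ^ d) := by
  rw [cube_set_preimage,
    (EuclideanSpace.volume_preserving_symm_measurableEquiv_toLp (Fin d)).measure_preimage
      (MeasurableSet.univ_pi fun i => measurableSet_Ioo).nullMeasurableSet,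
    volume_pi_pi]
  have h : ∀ i : Fin d, volume (Ioo (Q.c i - Q.len / 2) (Q.c i + Q.len / 2))
      = ENNReal.ofReal Q.len := by
    intro i; rw [Real.volume_Ioo]; congr 1; ring
  simp only [h, Finset.prod_const, Finset.card_univ, Fintype.card_fin,
    ← ENNReal.ofReal_pow Q.len_pos.le]

lemma cube_volume_toReal (Q : Cube d) : (volume Q.set).toReal = Q.len ^ d := by
  rw [cube_volume, ENNReal.toReal_ofReal (pow_nonneg Q.len_pos.le d)]

lemma cube_norm_le {Q : Cube d} {x : Rd d} (hx : x ∈ Q.set) :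
    ‖x - Q.c‖ ≤ Real.sqrt d * (Q.len / 2) := by
  have h : ‖x - Q.c‖ ≤ Real.sqrt (d * (Q.len / 2) ^ 2) := by
    rw [EuclideanSpace.norm_eq]
    apply Real.sqrt_le_sqrt
    have hstep : ∀ i : Fin d, ‖(x - Q.c) i‖ ^ 2 ≤ (Q.len / 2) ^ 2 := by
      intro i
      have h1 := (hx i).le
      rw [PiLp.sub_apply, Real.norm_eq_abs]
      exact pow_le_pow_left₀ (abs_nonneg _) h1 2
    calc ∑ i, ‖(x - Q.c) i‖ ^ 2 ≤ ∑ _i : Fin d, (Q.len / 2) ^ 2 :=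
          Finset.sum_le_sum fun i _ => hstep i
      _ = d * (Q.len / 2) ^ 2 := by
          rw [Finset.sum_const, Finset.card_univ, Fintype.card_fin, nsmul_eq_mul]
  calc ‖x - Q.c‖ ≤ Real.sqrt (d * (Q.len / 2) ^ 2) := h
    _ = Real.sqrt d * (Q.len / 2) := by
        rw [Real.sqrt_mul (Nat.cast_nonneg d), Real.sqrt_sq (by linarith [Q.len_pos])]

set_option maxHeartbeats 1000000 in
lemma logF_integrable (hd : 0 < d) (R : ℝ) (hR : 0 < R) (a : Rd d) :
    Integrable (fun x : Rd d => max 0 (Real.log (R / ‖x - a‖))) volume ∧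
    ∫ x : Rd d, max 0 (Real.log (R / ‖x - a‖))
      ≤ (volume (ball (0 : Rd d) 1)).toReal * R ^ d := by
  haveI : Nonempty (Fin d) := Fin.pos_iff_nonempty.mp hd
  haveI : Nontrivial (Rd d) := inferInstance
  set f : Rd d → ℝ := fun x => max 0 (Real.log (R / ‖x - a‖)) with hf
  have f_nn : ∀ x, 0 ≤ f x := fun x => le_max_left _ _
  have f_meas : Measurable f :=
    measurable_const.max (Real.measurable_log.comp
      (measurable_const.div ((measurable_id.sub measurable_const).norm)))
  set v1 : ENNReal := volume (ball (0 : Rd d) 1) with hv1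
  have hv1top : v1 < ⊤ := measure_ball_lt_top
  -- layer cake bound
  have hsub : ∀ t ∈ Ioi (0 : ℝ), {x : Rd d | t < f x} ⊆ ball a (R * Real.exp (-t)) := by
    intro t ht x hx
    simp only [mem_setOf_eq, hf, lt_max_iff] at hx
    rcases hx with h | h
    · exact absurd (ht.trans h) (lt_irrefl 0)
    · have hxa : ‖x - a‖ ≠ 0 := by
        intro h0
        rw [h0, div_zero, Real.log_zero] at h
        exact absurd (ht.trans h) (lt_irrefl 0)
      have hxa' : 0 < ‖x - a‖ := lt_of_le_of_ne (norm_nonneg _) (Ne.symm hxa)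
      have hdiv : 0 < R / ‖x - a‖ := div_pos hR hxa'
      rw [Real.lt_log_iff_exp_lt hdiv] at h
      have : ‖x - a‖ < R / Real.exp t := by
        rw [lt_div_iff₀ (Real.exp_pos t)]
        calc ‖x - a‖ * Real.exp t < ‖x - a‖ * (R / ‖x - a‖) := by
              exact mul_lt_mul_of_pos_left h hxa'
          _ = R := by field_simp
      rw [mem_ball_iff_norm]
      rwa [Real.exp_neg, ← div_eq_mul_inv]
  have hball : ∀ t : ℝ, volume (ball a (R * Real.exp (-t)))
      = ENNReal.ofReal (R ^ d * Real.exp (-(d * t))) * v1 := by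
    intro t
    rw [Measure.addHaar_ball volume a (by positivity : (0:ℝ) ≤ R * Real.exp (-t))]
    congr 2
    · rw [finrank_euclideanSpace_fin, mul_pow, ← Real.exp_nat_mul]
      ring_nf
  have key := lintegral_eq_lintegral_meas_lt volume
    (Filter.Eventually.of_forall f_nn) f_meas.aemeasurable
  have hintexp2 : IntegrableOn (fun t : ℝ => Real.exp (-((d:ℝ) * t))) (Ioi 0) := by
    have := exp_neg_integrableOn_Ioi 0 (show (0:ℝ) < (d:ℝ) by exact_mod_cast hd)
    simpa [neg_mul] using this
  have hintexp : IntegrableOn (fun t : ℝ => R ^ d * Real.exp (-(d * t))) (Ioi 0) :=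
    hintexp2.const_mul _
  have hintexp1 : IntegrableOn (fun t : ℝ => Real.exp (-t)) (Ioi (0:ℝ)) := by
    have := exp_neg_integrableOn_Ioi 0 (one_pos (α := ℝ))
    simpa using this
  have hrealint : ∫ t in Ioi (0:ℝ), R ^ d * Real.exp (-(d * t)) ≤ R ^ d := by
    rw [MeasureTheory.integral_const_mul]
    have h1 : ∫ t in Ioi (0:ℝ), Real.exp (-(d * t)) ≤ ∫ t in Ioi (0:ℝ), Real.exp (-t) := by
      apply setIntegral_mono_on hintexp2 hintexp1 measurableSet_Ioi
      intro t ht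
      apply Real.exp_le_exp.2
      have ht' : (0:ℝ) < t := ht
      have hd1 : (1:ℝ) ≤ d := by exact_mod_cast hd
      nlinarith
    calc R ^ d * ∫ t in Ioi (0:ℝ), Real.exp (-(d * t))
        ≤ R ^ d * ∫ t in Ioi (0:ℝ), Real.exp (-t) :=
          mul_le_mul_of_nonneg_left h1 (by positivity)
      _ = R ^ d := by rw [integral_exp_neg_Ioi_zero, mul_one]
  have hlint : ∫⁻ x, ENNReal.ofReal (f x) ≤ ENNReal.ofReal (R ^ d) * v1 := by
    rw [key]
    calc ∫⁻ t in Ioi (0:ℝ), volume {x : Rd d | t < f x}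
        ≤ ∫⁻ t in Ioi (0:ℝ), ENNReal.ofReal (R ^ d * Real.exp (-(d * t))) * v1 := by
          apply lintegral_mono_ae
          filter_upwards [ae_restrict_mem measurableSet_Ioi] with t ht
          rw [← hball t]
          exact measure_mono (hsub t ht)
      _ = (∫⁻ t in Ioi (0:ℝ), ENNReal.ofReal (R ^ d * Real.exp (-(d * t)))) * v1 := by
          have hmeas : AEMeasurable
              (fun t : ℝ => ENNReal.ofReal (R ^ d * Real.exp (-((d:ℝ) * t))))
              (volume.restrict (Ioi (0:ℝ))) :=
            (ENNReal.measurable_ofReal.comp (measurable_const.mul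
              (Real.measurable_exp.comp ((measurable_const.mul measurable_id).neg)))).aemeasurable
          rw [lintegral_mul_const'' v1 hmeas]
      _ ≤ ENNReal.ofReal (R ^ d) * v1 := by
          apply mul_le_mul_left _ v1
          rw [← ofReal_integral_eq_lintegral_ofReal hintexp
            (Filter.Eventually.of_forall fun t => by positivity)]
          exact ENNReal.ofReal_le_ofReal hrealint
  have hfin : ∫⁻ x, ENNReal.ofReal (f x) < ⊤ :=
    lt_of_le_of_lt hlint (ENNReal.mul_lt_top ENNReal.ofReal_lt_top hv1top)
  have hint : Integrable f volume := by
    refine ⟨f_meas.aestronglyMeasurable, ?_⟩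
    rw [hasFiniteIntegral_iff_ofReal (Filter.Eventually.of_forall f_nn)]
    exact hfin
  refine ⟨hint, ?_⟩
  rw [integral_eq_lintegral_of_nonneg_ae (Filter.Eventually.of_forall f_nn)
    f_meas.aestronglyMeasurable]
  calc (∫⁻ x, ENNReal.ofReal (f x)).toReal
      ≤ (ENNReal.ofReal (R ^ d) * v1).toReal :=
        ENNReal.toReal_mono (ENNReal.mul_lt_top ENNReal.ofReal_lt_top hv1top).ne hlint
    _ = (volume (ball (0 : Rd d) 1)).toReal * R ^ d := by
        rw [ENNReal.toReal_mul, ENNReal.toReal_ofReal (by positivity), mul_comm]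

set_option maxHeartbeats 1000000 in
lemma integrableOn_log_cube (hd : 0 < d) (a : Rd d) (Q : Cube d) :
    IntegrableOn (fun x : Rd d => Real.log ‖x - a‖) Q.set volume := by
  set R1 : ℝ := ‖Q.c - a‖ + Real.sqrt d * (Q.len / 2) + 1 with hR1
  have hR1' : 1 ≤ R1 := by
    have h1 : (0:ℝ) ≤ ‖Q.c - a‖ := norm_nonneg _
    have h2 : (0:ℝ) ≤ Real.sqrt d * (Q.len / 2) :=
      mul_nonneg (Real.sqrt_nonneg _) (by linarith [Q.len_pos])
    rw [hR1]; linarith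
  have hg : IntegrableOn
      (fun x : Rd d => Real.log R1 + max 0 (Real.log (1 / ‖x - a‖))) Q.set volume := by
    apply Integrable.add
    · refine integrableOn_const ?_
      rw [cube_volume]; exact ENNReal.ofReal_ne_top
    · exact (logF_integrable hd 1 one_pos a).1.integrableOn
  apply Integrable.mono' hg
  · exact ((Real.measurable_log.comp
      ((measurable_id.sub measurable_const).norm)).aestronglyMeasurable).restrict
  · filter_upwards [ae_restrict_mem (cube_measurableSet Q)] with x hx
    rw [Real.norm_eq_abs]
    have hle : ‖x - a‖ ≤ R1 := by
      have h1 : ‖x - a‖ ≤ ‖x - Q.c‖ + ‖Q.c - a‖ := by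
        calc ‖x - a‖ = ‖(x - Q.c) + (Q.c - a)‖ := by abel_nf
          _ ≤ ‖x - Q.c‖ + ‖Q.c - a‖ := norm_add_le _ _
      have h2 := cube_norm_le hx
      rw [hR1]; linarith
    rcases le_or_gt 1 ‖x - a‖ with h | h
    · rw [abs_of_nonneg (Real.log_nonneg h)]
      calc Real.log ‖x - a‖ ≤ Real.log R1 :=
            Real.log_le_log (by linarith) hle
        _ ≤ Real.log R1 + max 0 (Real.log (1 / ‖x - a‖)) := by
            have := le_max_left (0:ℝ) (Real.log (1 / ‖x - a‖)); linarith
    · rcases eq_or_lt_of_le (norm_nonneg (x - a)) with h0 | h0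
      · rw [← h0, Real.log_zero, abs_zero]
        have h1 : (0:ℝ) ≤ Real.log R1 := Real.log_nonneg hR1'
        simp only [div_zero, Real.log_zero, max_self]
        linarith
      · have hlogneg : Real.log ‖x - a‖ < 0 := Real.log_neg h0 h
        rw [abs_of_neg hlogneg]
        have : Real.log (1 / ‖x - a‖) = -Real.log ‖x - a‖ := by
          rw [one_div, Real.log_inv]
        have h2 : -Real.log ‖x - a‖ ≤ max 0 (Real.log (1 / ‖x - a‖)) := by
          rw [this] at *; exact le_max_right _ _
        have h1 : (0:ℝ) ≤ Real.log R1 := Real.log_nonneg hR1'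
        linarith

set_option maxHeartbeats 1000000 in
lemma key_log_avg (hd : 0 < d) : ∃ C : ℝ, 0 ≤ C ∧ ∀ (a : Rd d) (Q : Cube d),
    |avg Q (fun x => Real.log ‖x - a‖) - Real.log (max ‖Q.c - a‖ Q.len)| ≤ C := by
  haveI : Nonempty (Fin d) := Fin.pos_iff_nonempty.mp hd
  haveI : Nontrivial (Rd d) := inferInstance
  set s : ℝ := Real.sqrt d with hs
  have hs1 : 1 ≤ s := by
    rw [hs, show (1:ℝ) = Real.sqrt 1 by simp]
    exact Real.sqrt_le_sqrt (by exact_mod_cast hd)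
  set B : ℝ := (volume (ball (0 : Rd d) 1)).toReal with hB
  have hB0 : 0 ≤ B := ENNReal.toReal_nonneg
  have h3 : 0 ≤ B * s ^ d := mul_nonneg hB0 (pow_nonneg (le_trans zero_le_one hs1) d)
  have h2s0 : 0 ≤ Real.log 2 := Real.log_nonneg one_le_two
  have h4 : 0 ≤ Real.log (2 * s) := Real.log_nonneg (by nlinarith)
  refine ⟨Real.log 2 + Real.log (2 * s) + B * s ^ d, by linarith, ?_⟩
  intro a Q
  set ℓ : ℝ := Q.len with hℓ
  have hℓ0 : 0 < ℓ := Q.len_pos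
  set c : Rd d := Q.c with hc
  set M : ℝ := max ‖c - a‖ ℓ with hM
  have hMℓ : ℓ ≤ M := le_max_right _ _
  have hM0 : 0 < M := lt_of_lt_of_le hℓ0 hMℓ
  have hμ : (volume Q.set).toReal = ℓ ^ d := cube_volume_toReal Q
  have hμfin : volume Q.set < ⊤ := by rw [cube_volume]; exact ENNReal.ofReal_lt_top
  have hℓd : (0:ℝ) < ℓ ^ d := by positivity
  have hintlog := integrableOn_log_cube hd a Q
  -- it suffices to bound the difference integral
  set D : ℝ := ∫ x in Q.set, (Real.log ‖x - a‖ - Real.log M) with hD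
  have hDint : IntegrableOn (fun x : Rd d => Real.log ‖x - a‖ - Real.log M) Q.set volume := by
    apply hintlog.sub
    refine integrableOn_const hμfin.ne
  have havg : avg Q (fun x => Real.log ‖x - a‖) - Real.log M = (ℓ ^ d)⁻¹ * D := by
    rw [hD, integral_sub hintlog (integrableOn_const hμfin.ne),
      setIntegral_const, measureReal_def, hμ, smul_eq_mul]
    unfold avg Cube.vol
    rw [← hℓ]
    field_simp
  have hnormle : ∀ x ∈ Q.set, ‖x - a‖ ≤ ‖c - a‖ + s * (ℓ / 2) := by
    intro x hx
    calc ‖x - a‖ = ‖(x - c) + (c - a)‖ := by abel_nf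
      _ ≤ ‖x - c‖ + ‖c - a‖ := norm_add_le _ _
      _ ≤ s * (ℓ / 2) + ‖c - a‖ := by
          have := cube_norm_le hx; rw [← hs, ← hℓ, ← hc] at this; linarith
      _ = ‖c - a‖ + s * (ℓ / 2) := by ring
  have hDbound : |D| ≤ (Real.log 2 + Real.log (2 * s) + B * s ^ d) * ℓ ^ d := by
    rcases le_or_gt (s * ℓ) ‖c - a‖ with hcase | hcase
    · -- far case : M = ‖c - a‖, integrand bounded by log 2
      have hMeq : M = ‖c - a‖ := max_eq_left (le_trans (by nlinarith) hcase)
      have hbound : ∀ x ∈ Q.set, ‖Real.log ‖x - a‖ - Real.log M‖ ≤ Real.log 2 := by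
        intro x hx
        have h1 : ‖x - a‖ ≤ 2 * M := by
          have := hnormle x hx
          rw [← hMeq] at this
          nlinarith [hcase, hMℓ]
        have h2 : M / 2 ≤ ‖x - a‖ := by
          have h3 : ‖c - a‖ ≤ ‖c - x‖ + ‖x - a‖ := by
            calc ‖c - a‖ = ‖(c - x) + (x - a)‖ := by abel_nf
              _ ≤ ‖c - x‖ + ‖x - a‖ := norm_add_le _ _
          have h4 : ‖c - x‖ ≤ s * (ℓ / 2) := by
            rw [norm_sub_rev]
            have := cube_norm_le hx; rw [← hs, ← hℓ, ← hc] at this; exact this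
          rw [hMeq]
          nlinarith [hcase]
        have hxa0 : 0 < ‖x - a‖ := by nlinarith
        rw [Real.norm_eq_abs, abs_le]
        constructor
        · have : Real.log (M / 2) ≤ Real.log ‖x - a‖ := Real.log_le_log (by positivity) h2
          rw [Real.log_div hM0.ne' two_ne_zero] at this
          linarith
        · have : Real.log ‖x - a‖ ≤ Real.log (2 * M) := Real.log_le_log hxa0 h1
          rw [Real.log_mul two_ne_zero hM0.ne'] at this
          linarith
      have := norm_setIntegral_le_of_norm_le_const hμfin hbound
      rw [Real.norm_eq_abs] at this
      rw [measureReal_def, hμ] at this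
      calc |D| ≤ Real.log 2 * ℓ ^ d := this
        _ ≤ (Real.log 2 + Real.log (2 * s) + B * s ^ d) * ℓ ^ d := by
            have h2s : 0 ≤ Real.log (2 * s) := Real.log_nonneg (by nlinarith)
            have h3 : 0 ≤ B * s ^ d :=
              mul_nonneg hB0 (pow_nonneg (le_trans zero_le_one hs1) d)
            nlinarith [mul_nonneg (add_nonneg h2s h3) hℓd.le]
    · -- near case
      have hMle : M ≤ s * ℓ := max_le hcase.le (by nlinarith)
      have hane : volume ({a} : Set (Rd d)) = 0 := measure_singleton a
      have haene : ∀ᵐ x : Rd d ∂volume, x ≠ a := by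
        rw [ae_iff]
        convert hane using 2
        ext x; simp [not_not]
      -- upper bound
      have hupper : D ≤ Real.log (2 * s) * ℓ ^ d := by
        have hmono : ∀ᵐ x ∂(volume.restrict Q.set),
            Real.log ‖x - a‖ - Real.log M ≤ Real.log (2 * s) := by
          filter_upwards [ae_restrict_mem (cube_measurableSet Q),
            ae_restrict_of_ae haene] with x hx hxa
          have hxa0 : 0 < ‖x - a‖ := by
            rw [norm_pos_iff]; exact sub_ne_zero.2 hxa
          have h1 : ‖x - a‖ ≤ 2 * s * ℓ := by
            have := hnormle x hx
            nlinarith [hcase.le]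
          have h2 : Real.log ‖x - a‖ ≤ Real.log (2 * s * ℓ) := Real.log_le_log hxa0 h1
          have h3 : Real.log (2 * s * ℓ) = Real.log (2 * s) + Real.log ℓ := by
            rw [Real.log_mul (by nlinarith) hℓ0.ne']
          have h4 : Real.log ℓ ≤ Real.log M := Real.log_le_log hℓ0 hMℓ
          linarith
        have := integral_mono_ae hDint (integrableOn_const hμfin.ne) hmono
        rw [setIntegral_const, measureReal_def, hμ, smul_eq_mul] at this
        rw [hD]; linarith
      -- lower bound
      have hlower : -(B * s ^ d) * ℓ ^ d ≤ D := by
        have hFint := (logF_integrable hd (s * ℓ) (by nlinarith) a).1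
        have hFbound := (logF_integrable hd (s * ℓ) (by nlinarith) a).2
        set F : Rd d → ℝ := fun x => max 0 (Real.log (s * ℓ / ‖x - a‖)) with hF
        have hmono : ∀ᵐ x ∂(volume.restrict Q.set),
            -F x ≤ Real.log ‖x - a‖ - Real.log M := by
          filter_upwards [ae_restrict_mem (cube_measurableSet Q),
            ae_restrict_of_ae haene] with x hx hxa
          have hxa0 : 0 < ‖x - a‖ := by
            rw [norm_pos_iff]; exact sub_ne_zero.2 hxa
          have h1 : Real.log M ≤ Real.log (s * ℓ) := Real.log_le_log hM0 hMle
          have h2 : Real.log (s * ℓ / ‖x - a‖) = Real.log (s * ℓ) - Real.log ‖x - a‖ := by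
            rw [Real.log_div (by nlinarith) hxa0.ne']
          have h3 : Real.log (s * ℓ / ‖x - a‖) ≤ F x := le_max_right _ _
          rw [h2] at h3
          linarith
        have hint2 : IntegrableOn (fun x => -F x) Q.set volume := hFint.integrableOn.neg
        have := integral_mono_ae hint2 hDint hmono
        rw [integral_neg] at this
        have hF2 : ∫ x in Q.set, F x ≤ B * (s * ℓ) ^ d := by
          calc ∫ x in Q.set, F x ≤ ∫ x, F x :=
              setIntegral_le_integral hFint
                (Filter.Eventually.of_forall fun x => le_max_left _ _)
            _ ≤ B * (s * ℓ) ^ d := hFbound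
        rw [hD]
        have : -(B * (s * ℓ) ^ d) ≤ -∫ x in Q.set, F x := by linarith
        calc -(B * s ^ d) * ℓ ^ d = -(B * (s * ℓ) ^ d) := by rw [mul_pow]; ring
          _ ≤ -∫ x in Q.set, F x := this
          _ ≤ D := by rw [hD] at *; linarith
      rw [abs_le]
      constructor
      · nlinarith [hlower, mul_nonneg (add_nonneg h2s0 h4) hℓd.le]
      · nlinarith [hupper, mul_nonneg (add_nonneg h2s0 h3) hℓd.le]
  rw [havg, abs_mul, abs_of_nonneg (by positivity : (0:ℝ) ≤ (ℓ ^ d)⁻¹)]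
  calc (ℓ ^ d)⁻¹ * |D| ≤ (ℓ ^ d)⁻¹ * ((Real.log 2 + Real.log (2 * s) + B * s ^ d) * ℓ ^ d) :=
      mul_le_mul_of_nonneg_left hDbound (by positivity)
    _ = Real.log 2 + Real.log (2 * s) + B * s ^ d := by field_simp

end Aux

set_option maxHeartbeats 1000000 in
/-- There is a dimensional constant `C` such that for every `s ∈ ℝ^d` and every cube
`Q = Q(c,ℓ)`, the average of `log_{s,-s}` over `Q` satisfies
`|log_{s,-s,Q} - (log max(|c-s|,ℓ) - log max(|c+s|,ℓ))| ≤ C`. -/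
theorem statement_12 {d : ℕ} (hd : 0 < d) :
    ∃ C : ℝ, ∀ (s : Rd d) (Q : Cube d),
      |avg Q (logss s) -
        (Real.log (max ‖Q.c - s‖ Q.len) - Real.log (max ‖Q.c + s‖ Q.len))| ≤ C := by
  obtain ⟨C₁, hC₁0, hC₁⟩ := key_log_avg hd
  refine ⟨2 * C₁, fun s Q => ?_⟩
  have h1 := hC₁ s Q
  have h2 := hC₁ (-s) Q
  simp only [sub_neg_eq_add] at h2
  have hsplit : avg Q (logss s)
      = avg Q (fun x => Real.log ‖x - s‖) - avg Q (fun x => Real.log ‖x + s‖) := by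
    unfold avg logss
    rw [integral_sub (integrableOn_log_cube hd s Q)
      (by simpa only [sub_neg_eq_add, IntegrableOn] using integrableOn_log_cube hd (-s) Q), mul_sub]
  rw [hsplit]
  rw [abs_le] at h1 h2 ⊢
  constructor <;> linarith [h1.1, h1.2, h2.1, h2.2]

end TL
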